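/- Let M be an n-maniplex. Define a relation on the faces of M (where an i-face is a connected component of M_{[n]\{i}}) by F_i ≤ F_j iff i ≤ j and F_i ∩ F_j ≠ ∅ (as vertex sets). Then ≤ is a partial order on the set of faces of M. -/

import Mathlib

/-- An `n`-maniplex on vertex (flag) set `V`: a nonempty, connected, properly
`n`-edge-coloured simple `n`-regular graph (encoded by the fixed-point-free
involutions `σ i` giving the unique `i`-neighbour of each vertex) such that the
2-factors of colours `i`, `j` with `|i - j| > 1` are 4-cycles. -/
structure Maniplex (n : ℕ) (V : Type) where
  nonempty : Nonempty V
  σ : Fin n → V → V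
  invol : ∀ i v, σ i (σ i v) = v
  nofix : ∀ i v, σ i v ≠ v
  conn : ∀ u v : V, Relation.ReflTransGen (fun x y => ∃ i, σ i x = y) u v
  comm : ∀ i j : Fin n, (i : ℕ) + 1 < (j : ℕ) → ∀ v,
    σ i (σ j v) = σ j (σ i v) ∧ σ i v ≠ σ j v

namespace Maniplex

variable {n : ℕ} {V : Type}

/-- There is a path from `u` to `v` using only edges with colours in `A`. -/
def ReachIn (M : Maniplex n V) (A : Set (Fin n)) (u v : V) : Prop :=
  Relation.ReflTransGen (fun x y => ∃ i ∈ A, M.σ i x = y) u v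

/-- The `i`-face of `M` containing `v`: the connected component of `v` in the
spanning subgraph with all edges of colour `i` deleted. -/
def face (M : Maniplex n V) (i : Fin n) (v : V) : Set V :=
  {u | M.ReachIn {j | j ≠ i} v u}

/-- `S` is an `i`-face of `M`. -/
def IsFace (M : Maniplex n V) (i : Fin n) (S : Set V) : Prop :=
  ∃ v, S = M.face i v

end Maniplex
namespace Maniplex

variable {n : ℕ} {V : Type}

/-- The type of (proper) faces of a maniplex: a rank together with a face of that rank. -/
def FaceT (M : Maniplex n V) : Type := {F : Fin n × Set V // M.IsFace F.1 F.2}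

/-- The order on faces: `F ≤ G` iff `rank F ≤ rank G` and `F ∩ G ≠ ∅`. -/
def faceLe (M : Maniplex n V) (F G : M.FaceT) : Prop :=
  F.1.1 ≤ G.1.1 ∧ (F.1.2 ∩ G.1.2).Nonempty

/-- The faces of `M` together with adjoined minimum `none` and maximum `some none`. -/
def PFace (M : Maniplex n V) : Type := Option (Option M.FaceT)

/-- The order on `P_M` (with the improper minimum and maximum adjoined). -/
def ple (M : Maniplex n V) : M.PFace → M.PFace → Prop
  | none, _ => True
  | _, some none => True
  | some (some F), some (some G) => M.faceLe F G
  | _, _ => False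

/-- The rank function of `P_M`. -/
def prank (M : Maniplex n V) : M.PFace → ℤ
  | none => -1
  | some none => (n : ℤ)
  | some (some F) => ((F.1.1 : ℕ) : ℤ)

/-- The component intersection property: for every chain of faces, the
intersection of the faces is a connected subgraph of `M`. -/
def CIP (M : Maniplex n V) : Prop :=
  ∀ (k : ℕ) (r : Fin k → Fin n) (S : Fin k → Set V),
    (∀ a, M.IsFace (r a) (S a)) →
    (∀ a b, (S a ∩ S b).Nonempty) →
    ∀ u v : V, (∀ a, u ∈ S a) → (∀ a, v ∈ S a) →
      M.ReachIn {c | ∀ a, c ≠ r a} u v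

/-- The diamond condition for the poset `P_M`. -/
def Diamond (M : Maniplex n V) : Prop :=
  ∀ (i : Fin n) (E F : M.PFace), M.ple E F →
    M.prank E = ((i : ℕ) : ℤ) - 1 → M.prank F = ((i : ℕ) : ℤ) + 1 →
    ∃ H₁ H₂ : M.PFace, H₁ ≠ H₂ ∧
      ∀ H : M.PFace,
        (M.prank H = ((i : ℕ) : ℤ) ∧ M.ple E H ∧ M.ple H F) ↔ (H = H₁ ∨ H = H₂)

/-- A maximal chain of proper faces of `P_M`: one face of each rank,
pairwise incident. -/
def IsFlag (M : Maniplex n V) (S : Fin n → Set V) : Prop :=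
  (∀ i, M.IsFace i (S i)) ∧ ∀ i j, ((S i) ∩ (S j)).Nonempty

/-- `P_M` is faithful: every maximal chain of proper faces has a unique common vertex. -/
def Faithful (M : Maniplex n V) : Prop :=
  ∀ S : Fin n → Set V, M.IsFlag S → ∃! v : V, ∀ i, v ∈ S i

/-- Strong flag connectivity of `P_M`: any two maximal chains `Φ`, `Ψ` are joined
by a sequence of successively adjacent maximal chains all containing `Φ ∩ Ψ`. -/
def SFC (M : Maniplex n V) : Prop :=
  ∀ Φ Ψ : Fin n → Set V, M.IsFlag Φ → M.IsFlag Ψ →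
    Relation.ReflTransGen
      (fun X Y => M.IsFlag Y ∧ (∃ j, X j ≠ Y j ∧ ∀ l, l ≠ j → X l = Y l) ∧
        ∀ i, Φ i = Ψ i → Y i = Φ i) Φ Ψ

/-- The strong path intersection property. -/
def SPIP (M : Maniplex n V) : Prop :=
  ∀ (A B : Set (Fin n)) (u v : V),
    M.ReachIn A u v → M.ReachIn B u v → M.ReachIn (A ∩ B) u v

/-- The weak path intersection property. -/
def WPIP (M : Maniplex n V) : Prop :=
  ∀ i j : Fin n, i < j → ∀ u v : V,
    M.ReachIn {c | i < c} u v → M.ReachIn {c | c < j} u v →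
    M.ReachIn {c | i < c ∧ c < j} u v

/-- Reachability is symmetric since the `σ i` are involutions. -/
lemma reachIn_symm (M : Maniplex n V) {A : Set (Fin n)} {u v : V}
    (h : M.ReachIn A u v) : M.ReachIn A v u := by
  induction h with
  | refl => exact .refl
  | tail _ step ih =>
    obtain ⟨i, hi, hs⟩ := step
    exact Relation.ReflTransGen.head ⟨i, hi, by rw [← hs, M.invol]⟩ ih

lemma reachIn_mono (M : Maniplex n V) {A B : Set (Fin n)} (hAB : A ⊆ B) {u v : V}
    (h : M.ReachIn A u v) : M.ReachIn B u v :=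
  Relation.ReflTransGen.mono (fun _ _ ⟨i, hi, hs⟩ => ⟨i, hAB hi, hs⟩) _ _ h

lemma mem_face_self (M : Maniplex n V) (i : Fin n) (v : V) : v ∈ M.face i v :=
  Relation.ReflTransGen.refl

lemma face_eq_of_mem (M : Maniplex n V) {i : Fin n} {v u : V}
    (h : u ∈ M.face i v) : M.face i v = M.face i u := by
  ext x
  exact ⟨fun hx => Relation.ReflTransGen.trans (M.reachIn_symm h) hx,
    fun hx => Relation.ReflTransGen.trans h hx⟩

/-- If `d` commutes with every colour in `A`, applying `σ d` preserves
`A`-reachability. -/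
lemma reachIn_map (M : Maniplex n V) {A : Set (Fin n)} {d : Fin n}
    (hc : ∀ c ∈ A, ∀ x, M.σ c (M.σ d x) = M.σ d (M.σ c x)) {u v : V}
    (h : M.ReachIn A u v) : M.ReachIn A (M.σ d u) (M.σ d v) := by
  induction h with
  | refl => exact .refl
  | tail _ step ih =>
    obtain ⟨c, hcA, hs⟩ := step
    exact ih.tail ⟨c, hcA, by rw [hc c hcA, hs]⟩

/-- A walk avoiding colour `j` can be rearranged into a walk using colours
above `j` followed by a walk using colours below `j`, since colours on
opposite sides of `j` differ by at least 2 and hence commute. -/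
lemma reachIn_split (M : Maniplex n V) {j : Fin n} {u v : V}
    (h : M.ReachIn {c | c ≠ j} u v) :
    ∃ w, M.ReachIn {c | j < c} u w ∧ M.ReachIn {c | c < j} w v := by
  induction h with
  | refl => exact ⟨u, .refl, .refl⟩
  | tail _ step ih =>
    obtain ⟨w, hbig, hsmall⟩ := ih
    obtain ⟨d, hd, hs⟩ := step
    rcases lt_or_gt_of_ne (hd : d ≠ j) with hlt | hgt
    · exact ⟨w, hbig, hsmall.tail ⟨d, hlt, hs⟩⟩
    · refine ⟨M.σ d w, hbig.tail ⟨d, hgt, rfl⟩, ?_⟩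
      rw [← hs]
      refine M.reachIn_map (fun c hcA x => ?_) hsmall
      have h1 : (c : ℕ) < j := hcA
      have h2 : (j : ℕ) < d := hgt
      exact (M.comm c d (by omega) x).1

lemma isFace_eq (M : Maniplex n V) {i : Fin n} {S : Set V} (h : M.IsFace i S)
    {x : V} (hx : x ∈ S) : S = M.face i x := by
  obtain ⟨v, rfl⟩ := h
  exact M.face_eq_of_mem hx

end Maniplex
/-- The relation `F ≤ G` iff `rank F ≤ rank G` and `F ∩ G ≠ ∅` is a partial
order on the set of faces of a maniplex. -/
theorem faceLe_isPartialOrder {n : ℕ} {V : Type} (M : Maniplex n V) :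
    IsPartialOrder M.FaceT M.faceLe := by
  refine { refl := ?refl, trans := ?trans, antisymm := ?antisymm }
  case refl =>
    rintro ⟨⟨i, S⟩, v, hS⟩
    exact ⟨le_refl _, v, by rw [hS]; exact M.mem_face_self i v,
      by rw [hS]; exact M.mem_face_self i v⟩
  case trans =>
    rintro F G H ⟨hij, u, huF, huG⟩ ⟨hjk, v, hvG, hvH⟩
    refine ⟨le_trans hij hjk, ?_⟩
    rw [M.isFace_eq G.2 huG] at hvG
    obtain ⟨w, hbig, hsmall⟩ := M.reachIn_split hvG
    refine ⟨w, ?_, ?_⟩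
    · rw [M.isFace_eq F.2 huF]
      exact M.reachIn_mono (fun c hc => (lt_of_le_of_lt hij hc).ne') hbig
    · rw [M.isFace_eq H.2 hvH]
      exact M.reachIn_mono (fun c hc => (lt_of_lt_of_le hc hjk).ne)
        (M.reachIn_symm hsmall)
  case antisymm =>
    rintro F G ⟨hij, x, hxF, hxG⟩ ⟨hji, -⟩
    have h1 : F.1.1 = G.1.1 := le_antisymm hij hji
    refine Subtype.ext (Prod.ext h1 ?_)
    exact (M.isFace_eq F.2 hxF).trans (by rw [h1]; exact (M.isFace_eq G.2 hxG).symm)
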